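/- Suppose δ₃ := γ₀·h₂ + 2φ₀·(g₁·k₁ − h₃) ≠ 0 and set f := (h₁ + γ₀·(g₁² − h₂) + φ₀·(h₃ + 2g₁³ − 3g₁k₁))/δ₃. Then for every w > 0 one has δ₁(w)/δ₂(w) = −w·f, and consequently for any ξ > 0, any invertible M×M real matrix Σ and any vector β ∈ ℝ^M, the robust equilibrium amount u* := −(1/(ξ+1))·(δ₁(w)/δ₂(w))·Σ⁻¹β equals (w/(ξ+1))·f·Σ⁻¹β, i.e. it is proportional to the current wealth w. (Derivation of the equilibrium strategy (29)/(36) and Remark 4(ii).) -/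

import Mathlib

lemma cubic_deriv (a b c : ℝ) :
    deriv (fun x : ℝ => a * x - b * x ^ 2 + c * x ^ 3) =
      fun x => a - b * (2 * x) + c * (3 * x ^ 2) := by
  funext x
  have h1 : HasDerivAt (fun x : ℝ => a * x) a x := by
    simpa using (hasDerivAt_id x).const_mul a
  have h2 : HasDerivAt (fun x : ℝ => b * x ^ 2) (b * (2 * x)) x := by
    simpa using ((hasDerivAt_pow 2 x).const_mul b)
  have h3 : HasDerivAt (fun x : ℝ => c * x ^ 3) (c * (3 * x ^ 2)) x := by
    simpa using ((hasDerivAt_pow 3 x).const_mul c)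
  exact ((h1.sub h2).add h3).deriv

lemma lin_deriv (a : ℝ) : deriv (fun x : ℝ => a * x) = fun _ => a := by
  funext x
  simpa using ((hasDerivAt_id x).const_mul a).deriv

lemma quad_deriv (a : ℝ) : deriv (fun x : ℝ => a * x ^ 2) = fun x => a * (2 * x) := by
  funext x
  simpa using ((hasDerivAt_pow 2 x).const_mul a).deriv

lemma cubic_deriv2 (a b c : ℝ) :
    deriv (deriv (fun x : ℝ => a * x - b * x ^ 2 + c * x ^ 3)) =
      fun x => -(b * 2) + c * (3 * (2 * x)) := by
  rw [cubic_deriv]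
  funext x
  have h2 : HasDerivAt (fun x : ℝ => b * (2 * x)) (b * 2) x := by
    simpa [mul_assoc] using ((hasDerivAt_id x).const_mul (b * 2))
  have h3 : HasDerivAt (fun x : ℝ => c * (3 * x ^ 2)) (c * (3 * (2 * x))) x := by
    simpa [mul_assoc] using (hasDerivAt_pow 2 x).const_mul (c * 3)
  have : HasDerivAt (fun x : ℝ => a - b * (2 * x) + c * (3 * x ^ 2))
      (-(b * 2) + c * (3 * (2 * x))) x := by
    have h := ((hasDerivAt_const x a).sub h2).add h3
    rw [zero_sub] at h
    exact h
  exact this.deriv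

lemma lin_deriv2 (a : ℝ) : deriv (deriv (fun x : ℝ => a * x)) = fun _ => (0 : ℝ) := by
  rw [lin_deriv]; funext x; simp

lemma quad_deriv2 (a : ℝ) :
    deriv (deriv (fun x : ℝ => a * x ^ 2)) = fun _ => a * 2 := by
  rw [quad_deriv]
  funext x
  simpa [mul_assoc] using ((hasDerivAt_id x).const_mul (a * 2)).deriv



/-- `δ₁(w)` of equation (24) under the ansatz (27)-(28):
`(∂h/∂w)(w,y)|_{y=w} + (γ(w)g(w) + 2φ(w)g(w)²)g'(w) − φ(w)k(w)g'(w) − φ(w)g(w)k'(w)`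
with `γ(w) = γ₀/w`, `φ(w) = φ₀/w²`,
`h(w,y) = h₁w − (γ₀/(2y))h₂w² + (φ₀/(3y²))h₃w³`, `g(w) = g₁w`, `k(w) = k₁w²`. -/
noncomputable def delta1 (γ₀ φ₀ h₁ h₂ h₃ g₁ k₁ w : ℝ) : ℝ :=
  deriv (fun w' : ℝ =>
      h₁ * w' - γ₀ / (2 * w) * h₂ * w' ^ 2 + φ₀ / (3 * w ^ 2) * h₃ * w' ^ 3) w +
    (γ₀ / w * (g₁ * w) + 2 * (φ₀ / w ^ 2) * (g₁ * w) ^ 2) *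
      deriv (fun w' : ℝ => g₁ * w') w -
    φ₀ / w ^ 2 * (k₁ * w ^ 2) * deriv (fun w' : ℝ => g₁ * w') w -
    φ₀ / w ^ 2 * (g₁ * w) * deriv (fun w' : ℝ => k₁ * w' ^ 2) w

/-- `δ₂(w)` of equation (26) under the ansatz (27)-(28):
`(∂²h/∂w²)(w,y)|_{y=w} + (γ(w)g(w) + 2φ(w)g(w)²)g''(w) − φ(w)k(w)g''(w) − φ(w)g(w)k''(w)`. -/
noncomputable def delta2 (γ₀ φ₀ h₁ h₂ h₃ g₁ k₁ w : ℝ) : ℝ :=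
  deriv (deriv (fun w' : ℝ =>
      h₁ * w' - γ₀ / (2 * w) * h₂ * w' ^ 2 + φ₀ / (3 * w ^ 2) * h₃ * w' ^ 3)) w +
    (γ₀ / w * (g₁ * w) + 2 * (φ₀ / w ^ 2) * (g₁ * w) ^ 2) *
      deriv (deriv (fun w' : ℝ => g₁ * w')) w -
    φ₀ / w ^ 2 * (k₁ * w ^ 2) * deriv (deriv (fun w' : ℝ => g₁ * w')) w -
    φ₀ / w ^ 2 * (g₁ * w) * deriv (deriv (fun w' : ℝ => k₁ * w' ^ 2)) w

/-- Derivation of the equilibrium strategy (29)/(36) and Remark 4(ii):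
if `δ₃ = γ₀h₂ + 2φ₀(g₁k₁ − h₃) ≠ 0` and
`f = (h₁ + γ₀(g₁² − h₂) + φ₀(h₃ + 2g₁³ − 3g₁k₁))/δ₃`, then for every `w > 0`
one has `δ₁(w)/δ₂(w) = −w f`, and hence for any `ξ > 0`, any invertible real
`M×M` matrix `Σ` and any `β ∈ ℝ^M`, the robust equilibrium amount
`u* = −(1/(ξ+1))(δ₁(w)/δ₂(w)) Σ⁻¹β` equals `(w/(ξ+1)) f Σ⁻¹β`, i.e. it is
proportional to the current wealth `w`. -/
theorem equilibrium_strategy_proportional_to_wealth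
    (γ₀ φ₀ h₁ h₂ h₃ g₁ k₁ : ℝ) (hγ : 0 < γ₀) (hφ : 0 < φ₀)
    (hδ₃ : γ₀ * h₂ + 2 * φ₀ * (g₁ * k₁ - h₃) ≠ 0)
    (f : ℝ)
    (hf : f = (h₁ + γ₀ * (g₁ ^ 2 - h₂) + φ₀ * (h₃ + 2 * g₁ ^ 3 - 3 * g₁ * k₁)) /
      (γ₀ * h₂ + 2 * φ₀ * (g₁ * k₁ - h₃))) :
    ∀ w : ℝ, 0 < w →
      delta1 γ₀ φ₀ h₁ h₂ h₃ g₁ k₁ w / delta2 γ₀ φ₀ h₁ h₂ h₃ g₁ k₁ w = -(w * f) ∧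
      ∀ (M : ℕ) (ξ : ℝ), 0 < ξ →
        ∀ (S : Matrix (Fin M) (Fin M) ℝ), IsUnit S →
          ∀ β : Fin M → ℝ,
            (-(1 / (ξ + 1)) *
                (delta1 γ₀ φ₀ h₁ h₂ h₃ g₁ k₁ w / delta2 γ₀ φ₀ h₁ h₂ h₃ g₁ k₁ w)) •
              (S⁻¹).mulVec β =
            (w / (ξ + 1) * f) • (S⁻¹).mulVec β := by
  
    intro w hw
    have hw0 : w ≠ 0 := ne_of_gt hw
    have hd1 : delta1 γ₀ φ₀ h₁ h₂ h₃ g₁ k₁ w =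
        h₁ + γ₀ * (g₁ ^ 2 - h₂) + φ₀ * (h₃ + 2 * g₁ ^ 3 - 3 * g₁ * k₁) := by
      unfold delta1
      rw [cubic_deriv, lin_deriv, quad_deriv]
      field_simp
      ring
    have hd2 : delta2 γ₀ φ₀ h₁ h₂ h₃ g₁ k₁ w =
        -(γ₀ * h₂ + 2 * φ₀ * (g₁ * k₁ - h₃)) / w := by
      unfold delta2
      rw [cubic_deriv2, lin_deriv2, quad_deriv2]
      field_simp
      ring
    have hδ₂ : delta2 γ₀ φ₀ h₁ h₂ h₃ g₁ k₁ w ≠ 0 := by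
      rw [hd2]
      exact div_ne_zero (neg_ne_zero.mpr hδ₃) hw0
    have key : delta1 γ₀ φ₀ h₁ h₂ h₃ g₁ k₁ w / delta2 γ₀ φ₀ h₁ h₂ h₃ g₁ k₁ w = -(w * f) := by
      rw [div_eq_iff hδ₂, hd1, hd2, hf]
      rw [show -(w * ((h₁ + γ₀ * (g₁ ^ 2 - h₂) + φ₀ * (h₃ + 2 * g₁ ^ 3 - 3 * g₁ * k₁)) / (γ₀ * h₂ + 2 * φ₀ * (g₁ * k₁ - h₃)))) * (-(γ₀ * h₂ + 2 * φ₀ * (g₁ * k₁ - h₃)) / w) = (h₁ + γ₀ * (g₁ ^ 2 - h₂) + φ₀ * (h₃ + 2 * g₁ ^ 3 - 3 * g₁ * k₁)) / (γ₀ * h₂ + 2 * φ₀ * (g₁ * k₁ - h₃)) * (γ₀ * h₂ + 2 * φ₀ * (g₁ * k₁ - h₃)) * (w / w) by ring,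
        div_mul_cancel₀ _ hδ₃, div_self hw0, mul_one]
    refine ⟨key, ?_⟩
    intro M ξ hξ S hS β
    rw [key]
    congr 1
    have hξ1 : ξ + 1 ≠ 0 := by positivity
    field_simp
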